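/- Let A be a Banach *-algebra and I ⊆ A a two-sided *-ideal. Then the maximal C*-seminorm of I coincides with the restriction to I of the maximal C*-seminorm of A; consequently the C*-envelope C*(I) is isometrically isomorphic to the closure of the image of I in C*(A). -/

import Mathlib

/-- The maximal C*-seminorm `γ_A(x) = sup {‖π x‖}` over all continuous *-representations of a
Banach *-algebra `A` on Hilbert spaces. -/
noncomputable def maxCstarSeminorm (A : Type) [NonUnitalNormedRing A] [StarRing A]
    [NormedSpace ℂ A] [IsScalarTower ℂ A A] [SMulCommClass ℂ A A] [StarModule ℂ A] (x : A) : ℝ :=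
  sSup {r : ℝ | ∃ (H : Type) (_ : NormedAddCommGroup H) (_ : InnerProductSpace ℂ H)
    (_ : CompleteSpace H) (π : A →⋆ₙₐ[ℂ] (H →L[ℂ] H)), Continuous π ∧ r = ‖π x‖}

/-- The maximal C*-seminorm of a *-subalgebra `I` (e.g. a two-sided *-ideal) of `A`,
computed from the continuous *-representations of `I` itself. -/
noncomputable def maxCstarSeminormIdeal {A : Type} [NonUnitalNormedRing A] [StarRing A]
    [NormedSpace ℂ A] [IsScalarTower ℂ A A] [SMulCommClass ℂ A A] [StarModule ℂ A]
    (I : NonUnitalStarSubalgebra ℂ A) (x : I) : ℝ :=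
  sSup {r : ℝ | ∃ (H : Type) (_ : NormedAddCommGroup H) (_ : InnerProductSpace ℂ H)
    (_ : CompleteSpace H) (π : I →⋆ₙₐ[ℂ] (H →L[ℂ] H)), Continuous π ∧ r = ‖π x‖}

open scoped InnerProductSpace
set_option linter.unusedSectionVars false

namespace Stmt6Aux

variable {A : Type} [NonUnitalNormedRing A] [StarRing A] [NormedStarGroup A]
  [NormedSpace ℂ A] [IsScalarTower ℂ A A] [SMulCommClass ℂ A A] [StarModule ℂ A]
  {I : NonUnitalStarSubalgebra ℂ A}
  {H : Type} [NormedAddCommGroup H] [InnerProductSpace ℂ H] [CompleteSpace H]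

/-- Multiplication of an element of `A` into the left ideal `I`. -/
def amul (hleft : ∀ a : A, ∀ x ∈ I, a * x ∈ I) (a : A) (x : I) : I :=
  ⟨a * ↑x, hleft a ↑x x.2⟩

@[simp] theorem amul_coe (hleft : ∀ a : A, ∀ x ∈ I, a * x ∈ I) (a : A) (x : I) :
    ((amul hleft a x : I) : A) = a * ↑x := rfl

variable (π : I →⋆ₙₐ[ℂ] (H →L[ℂ] H))

/-- The evaluation map on the free module on `I × H`. -/
noncomputable def EE : ((I × H) →₀ ℂ) →ₗ[ℂ] H :=
  Finsupp.linearCombination ℂ (fun p => π p.1 p.2)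

variable (hleft : ∀ a : A, ∀ x ∈ I, a * x ∈ I)

/-- The action of `a : A` on formal combinations. -/
noncomputable def SA (a : A) : ((I × H) →₀ ℂ) →ₗ[ℂ] H :=
  Finsupp.linearCombination ℂ (fun p => π (amul hleft a p.1) p.2)

theorem inner_pi (u v : I) (ζ ζ' : H) :
    ⟪π u ζ, π v ζ'⟫_ℂ = ⟪ζ, π (star u * v) ζ'⟫_ℂ := by
  rw [map_mul, map_star, ContinuousLinearMap.star_eq_adjoint, ContinuousLinearMap.mul_apply,
    ContinuousLinearMap.adjoint_inner_right]

theorem inner_lincomb (v w : I × H → H) (f g : (I × H) →₀ ℂ) :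
    ⟪Finsupp.linearCombination ℂ v f, Finsupp.linearCombination ℂ w g⟫_ℂ =
      ∑ p ∈ f.support, ∑ q ∈ g.support,
        (starRingEnd ℂ) (f p) * g q * ⟪v p, w q⟫_ℂ := by
  rw [Finsupp.linearCombination_apply, Finsupp.linearCombination_apply, Finsupp.sum, Finsupp.sum,
    sum_inner]
  refine Finset.sum_congr rfl fun p _ => ?_
  rw [inner_sum]
  refine Finset.sum_congr rfl fun q _ => ?_
  rw [inner_smul_left, inner_smul_right]; ring

theorem inner_SA_self (a : A) (f : (I × H) →₀ ℂ) :
    ⟪SA π hleft a f, SA π hleft a f⟫_ℂ = ⟪EE π f, SA π hleft (star a * a) f⟫_ℂ := by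
  simp only [SA, EE]
  rw [inner_lincomb, inner_lincomb]
  refine Finset.sum_congr rfl fun p _ => Finset.sum_congr rfl fun q _ => ?_
  rw [inner_pi, inner_pi]
  have hxy : star (amul hleft a p.1) * amul hleft a q.1
      = star p.1 * amul hleft (star a * a) q.1 := by
    ext
    simp [mul_assoc, star_mul]
  rw [hxy]

theorem SA_norm_le {C : ℝ} (hC0 : 0 ≤ C) (hC : ∀ y : I, ‖π y‖ ≤ C * ‖y‖) (b : A)
    (f : (I × H) →₀ ℂ) :
    ‖SA π hleft b f‖ ≤ C * ‖b‖ * (∑ p ∈ f.support, ‖f p‖ * (‖(p.1 : A)‖ * ‖p.2‖)) := by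
  rw [SA, Finsupp.linearCombination_apply, Finsupp.sum]
  refine (norm_sum_le _ _).trans ?_
  rw [Finset.mul_sum]
  refine Finset.sum_le_sum fun p _ => ?_
  rw [norm_smul]
  have h1 : ‖π (amul hleft b p.1) p.2‖ ≤ C * ‖b‖ * (‖(p.1 : A)‖ * ‖p.2‖) := by
    refine (ContinuousLinearMap.le_opNorm _ _).trans ?_
    have h2 : ‖π (amul hleft b p.1)‖ ≤ C * (‖b‖ * ‖(p.1 : A)‖) := by
      refine (hC _).trans ?_
      have : ‖(amul hleft b p.1 : I)‖ = ‖b * (p.1 : A)‖ := rfl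
      rw [this]
      exact mul_le_mul_of_nonneg_left (norm_mul_le _ _) hC0
    calc ‖π (amul hleft b p.1)‖ * ‖p.2‖ ≤ C * (‖b‖ * ‖(p.1 : A)‖) * ‖p.2‖ :=
          mul_le_mul_of_nonneg_right h2 (norm_nonneg _)
      _ = C * ‖b‖ * (‖(p.1 : A)‖ * ‖p.2‖) := by ring
  calc ‖f p‖ * ‖π (amul hleft b p.1) p.2‖ ≤ ‖f p‖ * (C * ‖b‖ * (‖(p.1 : A)‖ * ‖p.2‖)) :=
        mul_le_mul_of_nonneg_left h1 (norm_nonneg _)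
    _ = C * ‖b‖ * (‖f p‖ * (‖(p.1 : A)‖ * ‖p.2‖)) := by ring

/-- Iterated `a ↦ a* a`. -/
def bseq (a : A) : ℕ → A
  | 0 => a
  | k + 1 => star (bseq a k) * bseq a k

theorem bseq_norm_le (a : A) : ∀ k, ‖bseq a k‖ ≤ ‖a‖ ^ 2 ^ k
  | 0 => by simp [bseq]
  | k + 1 => by
    have ih := bseq_norm_le a k
    calc ‖bseq a (k + 1)‖ ≤ ‖star (bseq a k)‖ * ‖bseq a k‖ := norm_mul_le _ _
      _ = ‖bseq a k‖ * ‖bseq a k‖ := by rw [norm_star]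
      _ ≤ ‖a‖ ^ 2 ^ k * ‖a‖ ^ 2 ^ k :=
          mul_le_mul ih ih (norm_nonneg _) (pow_nonneg (norm_nonneg _) _)
      _ = ‖a‖ ^ 2 ^ (k + 1) := by rw [← pow_add]; congr 1; omega

theorem SA_step (b : A) (f : (I × H) →₀ ℂ) :
    ‖SA π hleft b f‖ ^ 2 ≤ ‖EE π f‖ * ‖SA π hleft (star b * b) f‖ := by
  have h1 : ‖SA π hleft b f‖ ^ 2 = RCLike.re ⟪SA π hleft b f, SA π hleft b f⟫_ℂ :=
    (inner_self_eq_norm_sq _).symm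
  rw [h1, inner_SA_self]
  refine (RCLike.re_le_norm _).trans ?_
  exact norm_inner_le_norm _ _

theorem SA_iter (a : A) (f : (I × H) →₀ ℂ) :
    ∀ k, ‖SA π hleft a f‖ ^ 2 ^ k ≤ ‖SA π hleft (bseq a k) f‖ * ‖EE π f‖ ^ (2 ^ k - 1)
  | 0 => by simp [bseq]
  | k + 1 => by
    have ih := SA_iter a f k
    have h1 : (1 : ℕ) ≤ 2 ^ k := Nat.one_le_two_pow
    have hexp : (2 : ℕ) ^ (k + 1) = 2 ^ k * 2 := by omega
    calc ‖SA π hleft a f‖ ^ 2 ^ (k + 1) = (‖SA π hleft a f‖ ^ 2 ^ k) ^ 2 := by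
          rw [hexp, pow_mul]
      _ ≤ (‖SA π hleft (bseq a k) f‖ * ‖EE π f‖ ^ (2 ^ k - 1)) ^ 2 :=
          pow_le_pow_left₀ (pow_nonneg (norm_nonneg _) _) ih 2
      _ = ‖SA π hleft (bseq a k) f‖ ^ 2 * (‖EE π f‖ ^ (2 ^ k - 1)) ^ 2 := mul_pow _ _ _
      _ ≤ ‖EE π f‖ * ‖SA π hleft (star (bseq a k) * bseq a k) f‖ * (‖EE π f‖ ^ (2 ^ k - 1)) ^ 2 :=
          mul_le_mul_of_nonneg_right (SA_step π hleft _ f)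
            (pow_nonneg (pow_nonneg (norm_nonneg _) _) _)
      _ = ‖SA π hleft (bseq a (k + 1)) f‖ * (‖EE π f‖ * (‖EE π f‖ ^ (2 ^ k - 1)) ^ 2) := by
          rw [bseq]; ring
      _ = ‖SA π hleft (bseq a (k + 1)) f‖ * ‖EE π f‖ ^ (2 ^ (k + 1) - 1) := by
          congr 1
          have h2 : (1 : ℕ) ≤ 2 ^ k := Nat.one_le_two_pow
          rw [← pow_mul, ← pow_succ']
          congr 1
          omega

theorem key_bound (hπ : Continuous π) (a : A) (f : (I × H) →₀ ℂ) :
    ‖SA π hleft a f‖ ≤ ‖a‖ * ‖EE π f‖ := by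
  obtain ⟨C, hC0, hC⟩ : ∃ C : ℝ, 0 ≤ C ∧ ∀ y : I, ‖π y‖ ≤ C * ‖y‖ := by
    let πL : I →L[ℂ] (H →L[ℂ] H) :=
      { toFun := π
        map_add' := map_add π
        map_smul' := map_smul π
        cont := hπ }
    exact ⟨‖πL‖, ContinuousLinearMap.opNorm_nonneg πL, fun y => πL.le_opNorm y⟩
  set K : ℝ := ∑ p ∈ f.support, ‖f p‖ * (‖(p.1 : A)‖ * ‖p.2‖) with hK
  have hK0 : 0 ≤ K := Finset.sum_nonneg fun p _ =>
    mul_nonneg (norm_nonneg _) (mul_nonneg (norm_nonneg _) (norm_nonneg _))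
  set L : ℝ := ‖SA π hleft a f‖ with hL
  set t : ℝ := ‖a‖ * ‖EE π f‖ with ht
  have hmain : ∀ k, L ^ 2 ^ k ≤ C * K * (‖a‖ ^ 2 ^ k * ‖EE π f‖ ^ (2 ^ k - 1)) := by
    intro k
    refine (SA_iter π hleft a f k).trans ?_
    have h2 : ‖SA π hleft (bseq a k) f‖ ≤ C * ‖bseq a k‖ * K := SA_norm_le π hleft hC0 hC _ f
    have h3 : C * ‖bseq a k‖ * K ≤ C * ‖a‖ ^ 2 ^ k * K := by
      have := bseq_norm_le a k
      have h4 : C * ‖bseq a k‖ ≤ C * ‖a‖ ^ 2 ^ k := mul_le_mul_of_nonneg_left this hC0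
      exact mul_le_mul_of_nonneg_right h4 hK0
    calc ‖SA π hleft (bseq a k) f‖ * ‖EE π f‖ ^ (2 ^ k - 1)
        ≤ C * ‖a‖ ^ 2 ^ k * K * ‖EE π f‖ ^ (2 ^ k - 1) :=
          mul_le_mul_of_nonneg_right (h2.trans h3) (pow_nonneg (norm_nonneg _) _)
      _ = C * K * (‖a‖ ^ 2 ^ k * ‖EE π f‖ ^ (2 ^ k - 1)) := by ring
  by_contra hcon
  push_neg at hcon
  have hL0 : 0 ≤ L := norm_nonneg _
  have ht0 : 0 ≤ t := mul_nonneg (norm_nonneg _) (norm_nonneg _)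
  have hLpos : 0 < L := lt_of_le_of_lt ht0 hcon
  rcases eq_or_lt_of_le (norm_nonneg (EE π f)) with hE0 | hEpos
  · -- ‖EE f‖ = 0
    have h5 := hmain 1
    rw [← hE0] at h5
    norm_num at h5
    exact hLpos.ne' h5
  rcases eq_or_lt_of_le (norm_nonneg a) with ha0 | hapos
  · have h5 := hmain 1
    rw [← ha0] at h5
    norm_num at h5
    exact hLpos.ne' h5
  have htpos : 0 < t := mul_pos hapos hEpos
  set q : ℝ := L / t with hq
  have hq1 : 1 < q := (one_lt_div htpos).mpr hcon
  set D : ℝ := C * K / ‖EE π f‖ with hD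
  have hqk : ∀ k, q ^ 2 ^ k ≤ D := by
    intro k
    have h5 := hmain k
    have hpow : ‖a‖ ^ 2 ^ k * ‖EE π f‖ ^ (2 ^ k - 1) = t ^ 2 ^ k / ‖EE π f‖ := by
      rw [ht, mul_pow]
      rw [mul_div_assoc]
      congr 1
      rw [eq_div_iff hEpos.ne', ← pow_succ]
      congr 1
      have : (1 : ℕ) ≤ 2 ^ k := Nat.one_le_two_pow
      omega
    rw [hpow] at h5
    have h6 : L ^ 2 ^ k ≤ D * t ^ 2 ^ k := by
      rw [hD]
      calc L ^ 2 ^ k ≤ C * K * (t ^ 2 ^ k / ‖EE π f‖) := h5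
        _ = C * K / ‖EE π f‖ * t ^ 2 ^ k := by ring
    rw [hq, div_pow, div_le_iff₀ (pow_pos htpos _)]
    exact h6
  have htend : Filter.Tendsto (fun n => q ^ n) Filter.atTop Filter.atTop :=
    tendsto_pow_atTop_atTop_of_one_lt hq1
  obtain ⟨n, hn⟩ := (htend.eventually_gt_atTop D).exists
  have : q ^ n ≤ q ^ 2 ^ n := pow_le_pow_right₀ hq1.le (Nat.le_of_lt Nat.lt_two_pow_self)
  exact absurd ((this.trans (hqk n))) (not_le.mpr hn)


section Construction

variable (hπ : Continuous π)

/-- The essential subspace (non-closed). -/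
noncomputable abbrev MM : Submodule ℂ H := LinearMap.range (EE π)

/-- The essential subspace (closed). -/
noncomputable abbrev NN : Submodule ℂ H := (MM π).topologicalClosure

theorem pi_mem_MM (y : I) (ζ : H) : π y ζ ∈ MM π :=
  ⟨Finsupp.single (y, ζ) 1, by rw [EE, Finsupp.linearCombination_single, one_smul]⟩

theorem SA_mem_MM (a : A) (f : (I × H) →₀ ℂ) : SA π hleft a f ∈ MM π :=
  ⟨Finsupp.mapDomain (fun p => (amul hleft a p.1, p.2)) f, by
    rw [EE, Finsupp.linearCombination_mapDomain]; rfl⟩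

include hπ in
theorem ker_le_ker (a : A) : LinearMap.ker (EE π) ≤ LinearMap.ker (SA π hleft a) := by
  intro f hf
  rw [LinearMap.mem_ker] at hf ⊢
  have h := key_bound π hleft hπ a f
  rw [hf, norm_zero, mul_zero] at h
  exact norm_le_zero_iff.mp h

noncomputable def rho0 (a : A) : MM π →ₗ[ℂ] H :=
  (Submodule.liftQ (LinearMap.ker (EE π)) (SA π hleft a) (ker_le_ker π hleft hπ a)) ∘ₗ
    (LinearMap.quotKerEquivRange (EE π)).symm.toLinearMap

theorem rho0_apply (a : A) (f : (I × H) →₀ ℂ) (h : EE π f ∈ MM π) :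
    rho0 π hleft hπ a ⟨EE π f, h⟩ = SA π hleft a f := by
  rw [rho0, LinearMap.comp_apply, LinearEquiv.coe_toLinearMap,
    LinearMap.quotKerEquivRange_symm_apply_image (EE π) f h, Submodule.mkQ_apply, Submodule.liftQ_apply]

theorem rho0_bound (a : A) (m : MM π) : ‖rho0 π hleft hπ a m‖ ≤ ‖a‖ * ‖m‖ := by
  obtain ⟨v, hv⟩ := m
  obtain ⟨f, rfl⟩ := hv
  exact (congrArg norm (rho0_apply π hleft hπ a f _)).trans_le (key_bound π hleft hπ a f)

noncomputable def rho1 (a : A) : MM π →L[ℂ] H :=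
  LinearMap.mkContinuous (rho0 π hleft hπ a) ‖a‖ (rho0_bound π hleft hπ a)

theorem rho1_apply (a : A) (f : (I × H) →₀ ℂ) (h : EE π f ∈ MM π) :
    rho1 π hleft hπ a ⟨EE π f, h⟩ = SA π hleft a f := rho0_apply π hleft hπ a f h

/-- Inclusion of the essential subspace into its closure. -/
noncomputable def inclMN : MM π →L[ℂ] NN π :=
  LinearMap.mkContinuous
    { toFun := fun m => ⟨↑m, (MM π).le_topologicalClosure m.2⟩
      map_add' := fun _ _ => rfl
      map_smul' := fun _ _ => rfl }
    1 (fun m => by rw [one_mul]; rfl)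

@[simp] theorem inclMN_coe (m : MM π) : ((inclMN π m : NN π) : H) = ↑m := rfl

theorem denseRange_inclMN : DenseRange (inclMN π) := by
  intro x
  rw [closure_subtype]
  have himg : Subtype.val '' Set.range (inclMN π) = (MM π : Set H) := by
    ext v
    constructor
    · rintro ⟨n, ⟨m, rfl⟩, rfl⟩
      exact m.2
    · intro hv
      exact ⟨inclMN π ⟨v, hv⟩, ⟨⟨v, hv⟩, rfl⟩, rfl⟩
  rw [himg, ← Submodule.topologicalClosure_coe]
  exact x.2

theorem isometry_inclMN : Isometry (inclMN π) :=
  AddMonoidHomClass.isometry_of_norm (inclMN π) (fun m => rfl)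

noncomputable def rho2 (a : A) : NN π →L[ℂ] H :=
  (rho1 π hleft hπ a).extend (inclMN π)

theorem rho2_incl (a : A) (m : MM π) :
    rho2 π hleft hπ a (inclMN π m) = rho1 π hleft hπ a m :=
  ContinuousLinearMap.extend_eq _ (denseRange_inclMN π) (isometry_inclMN π).isUniformInducing _

theorem rho2_apply (a : A) (f : (I × H) →₀ ℂ) (h : EE π f ∈ NN π) :
    rho2 π hleft hπ a ⟨EE π f, h⟩ = SA π hleft a f := by
  have h1 : (⟨EE π f, h⟩ : NN π) = inclMN π ⟨EE π f, ⟨f, rfl⟩⟩ := rfl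
  erw [h1, rho2_incl, rho1_apply]

theorem rho2_ext {f g : NN π →L[ℂ] H}
    (h : ∀ m, f (inclMN π m) = g (inclMN π m)) : f = g :=
  ContinuousLinearMap.coeFn_injective
    ((denseRange_inclMN π).equalizer f.continuous g.continuous (funext h))

theorem rho2_norm_le (a : A) : ‖rho2 π hleft hπ a‖ ≤ ‖a‖ := by
  have h_e : ∀ m : MM π, ‖m‖ ≤ ((1 : NNReal) : ℝ) * ‖inclMN π m‖ := fun m => by
    rw [NNReal.coe_one, one_mul]; rfl
  have h2 : ‖rho2 π hleft hπ a‖ ≤ ((1 : NNReal) : ℝ) * ‖rho1 π hleft hπ a‖ :=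
    (rho1 π hleft hπ a).opNorm_extend_le (denseRange_inclMN π) h_e
  rw [NNReal.coe_one, one_mul] at h2
  exact h2.trans (LinearMap.mkContinuous_norm_le _ (norm_nonneg a) _)

theorem rho2_mem (a : A) (n : NN π) : (rho2 π hleft hπ a n : H) ∈ NN π := by
  refine (denseRange_inclMN π).induction_on n ?_ ?_
  · exact (Submodule.isClosed_topologicalClosure (MM π)).preimage (rho2 π hleft hπ a).continuous
  · rintro ⟨v, hv⟩
    obtain ⟨f, rfl⟩ := hv
    have h1 : inclMN π ⟨EE π f, ⟨f, rfl⟩⟩ = (⟨EE π f, (MM π).le_topologicalClosure ⟨f, rfl⟩⟩ : NN π) := rfl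
    rw [h1, rho2_apply]
    exact (MM π).le_topologicalClosure (SA_mem_MM π hleft a f)

theorem SA_add (a b : A) (f : (I × H) →₀ ℂ) :
    SA π hleft (a + b) f = SA π hleft a f + SA π hleft b f := by
  simp only [SA, Finsupp.linearCombination_apply, Finsupp.sum, ← Finset.sum_add_distrib]
  refine Finset.sum_congr rfl fun p _ => ?_
  have h1 : amul hleft (a + b) p.1 = amul hleft a p.1 + amul hleft b p.1 :=
    Subtype.ext (add_mul a b _)
  rw [h1, map_add, ContinuousLinearMap.add_apply, smul_add]

theorem SA_smul (c : ℂ) (a : A) (f : (I × H) →₀ ℂ) :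
    SA π hleft (c • a) f = c • SA π hleft a f := by
  simp only [SA, Finsupp.linearCombination_apply, Finsupp.sum, Finset.smul_sum]
  refine Finset.sum_congr rfl fun p _ => ?_
  have h1 : amul hleft (c • a) p.1 = c • amul hleft a p.1 :=
    Subtype.ext (smul_mul_assoc c a _)
  rw [h1, map_smul, ContinuousLinearMap.smul_apply, smul_comm]

theorem SA_zero (f : (I × H) →₀ ℂ) : SA π hleft (0 : A) f = 0 := by
  simp only [SA, Finsupp.linearCombination_apply, Finsupp.sum]
  refine Finset.sum_eq_zero fun p _ => ?_
  have h1 : amul hleft (0 : A) p.1 = 0 := Subtype.ext (zero_mul _)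
  rw [h1, map_zero, ContinuousLinearMap.zero_apply, smul_zero]

theorem incl_mk (f : (I × H) →₀ ℂ) (h : EE π f ∈ MM π) :
    inclMN π ⟨EE π f, h⟩ = ⟨EE π f, (MM π).le_topologicalClosure h⟩ := rfl

theorem rho2_add (a b : A) :
    rho2 π hleft hπ (a + b) = rho2 π hleft hπ a + rho2 π hleft hπ b := by
  refine rho2_ext π (fun m => ?_)
  obtain ⟨v, hv⟩ := m
  obtain ⟨f, rfl⟩ := hv
  erw [ContinuousLinearMap.add_apply, rho2_incl, rho2_incl, rho2_incl, rho1_apply, rho1_apply,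
    rho1_apply, SA_add]

theorem rho2_smul (c : ℂ) (a : A) :
    rho2 π hleft hπ (c • a) = c • rho2 π hleft hπ a := by
  refine rho2_ext π (fun m => ?_)
  obtain ⟨v, hv⟩ := m
  obtain ⟨f, rfl⟩ := hv
  erw [ContinuousLinearMap.smul_apply, rho2_incl, rho2_incl, rho1_apply, rho1_apply, SA_smul]

theorem rho2_zero : rho2 π hleft hπ (0 : A) = 0 := by
  refine rho2_ext π (fun m => ?_)
  obtain ⟨v, hv⟩ := m
  obtain ⟨f, rfl⟩ := hv
  erw [ContinuousLinearMap.zero_apply, rho2_incl, rho1_apply, SA_zero]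

theorem rho2_mul (a b : A) (n : NN π) :
    rho2 π hleft hπ (a * b) n = rho2 π hleft hπ a ⟨rho2 π hleft hπ b n, rho2_mem π hleft hπ b n⟩ := by
  refine (denseRange_inclMN π).induction_on n ?_ ?_
  · refine isClosed_eq (rho2 π hleft hπ (a * b)).continuous ?_
    exact (rho2 π hleft hπ a).continuous.comp
      ((rho2 π hleft hπ b).continuous.subtype_mk _)
  · rintro ⟨v, hv⟩
    obtain ⟨f, rfl⟩ := hv
    have haux : ∀ (w : H) (hw : w ∈ NN π), w = SA π hleft b f →
        rho2 π hleft hπ a ⟨w, hw⟩ = SA π hleft (a * b) f := by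
      rintro w hw rfl
      have h3 : SA π hleft b f
          = EE π (Finsupp.mapDomain (fun p => (amul hleft b p.1, p.2)) f) := by
        rw [EE, Finsupp.linearCombination_mapDomain]; rfl
      revert hw
      rw [h3]
      intro hw
      rw [rho2_apply, SA, SA, Finsupp.linearCombination_mapDomain]
      refine LinearMap.congr_fun ?_ f
      congr 1
      funext p
      exact congrArg (fun y : I => π y p.2) (Subtype.ext (mul_assoc a b (p.1 : A)).symm)
    have hval : rho2 π hleft hπ b (inclMN π ⟨EE π f, ⟨f, rfl⟩⟩) = SA π hleft b f := by
      erw [rho2_incl, rho1_apply]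
    erw [rho2_incl, rho1_apply]
    exact (haux _ (rho2_mem π hleft hπ b _) hval).symm

theorem rho2_adjoint (a : A) (n n' : NN π) :
    ⟪rho2 π hleft hπ (star a) n, (n' : H)⟫_ℂ = ⟪(n : H), rho2 π hleft hπ a n'⟫_ℂ := by
  have base : ∀ (m m' : MM π),
      ⟪rho2 π hleft hπ (star a) (inclMN π m), ((inclMN π m' : NN π) : H)⟫_ℂ
        = ⟪((inclMN π m : NN π) : H), rho2 π hleft hπ a (inclMN π m')⟫_ℂ := by
    rintro ⟨v, hv⟩ ⟨v', hv'⟩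
    obtain ⟨f, rfl⟩ := hv
    obtain ⟨f', rfl⟩ := hv'
    erw [rho2_incl, rho2_incl, rho1_apply, rho1_apply]
    show ⟪SA π hleft (star a) f, EE π f'⟫_ℂ = ⟪EE π f, SA π hleft a f'⟫_ℂ
    simp only [SA, EE]
    rw [inner_lincomb, inner_lincomb]
    refine Finset.sum_congr rfl fun p _ => Finset.sum_congr rfl fun q _ => ?_
    rw [inner_pi, inner_pi]
    have hxy : star (amul hleft (star a) p.1) * q.1 = star p.1 * amul hleft a q.1 := by
      ext
      simp [mul_assoc, star_mul]
    rw [hxy]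
  have step1 : ∀ (m : MM π) (n' : NN π),
      ⟪rho2 π hleft hπ (star a) (inclMN π m), (n' : H)⟫_ℂ
        = ⟪((inclMN π m : NN π) : H), rho2 π hleft hπ a n'⟫_ℂ := by
    intro m n'
    refine (denseRange_inclMN π).induction_on (p := fun n' =>
      ⟪rho2 π hleft hπ (star a) (inclMN π m), (n' : H)⟫_ℂ
        = ⟪((inclMN π m : NN π) : H), rho2 π hleft hπ a n'⟫_ℂ) n' ?_ (fun m' => base m m')
    · exact isClosed_eq (Continuous.inner continuous_const continuous_subtype_val)
        (Continuous.inner continuous_const (rho2 π hleft hπ a).continuous)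
  refine (denseRange_inclMN π).induction_on (p := fun n =>
      ⟪rho2 π hleft hπ (star a) n, (n' : H)⟫_ℂ = ⟪(n : H), rho2 π hleft hπ a n'⟫_ℂ) n ?_
      (fun m => step1 m n')
  · exact isClosed_eq (Continuous.inner (rho2 π hleft hπ (star a)).continuous continuous_const)
      (Continuous.inner continuous_subtype_val continuous_const)

noncomputable def rhoFun (a : A) : H →L[ℂ] H :=
  (rho2 π hleft hπ a).comp ((NN π).orthogonalProjectionOnto)

theorem rhoFun_apply (a : A) (ξ : H) :
    rhoFun π hleft hπ a ξ = rho2 π hleft hπ a ((NN π).orthogonalProjectionOnto ξ) := rfl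

theorem proj_of_mem {v : H} (hv : v ∈ NN π) :
    (NN π).orthogonalProjectionOnto v = ⟨v, hv⟩ :=
  Submodule.orthogonalProjectionOnto_mem_subspace_eq_self (⟨v, hv⟩ : NN π)

set_option maxHeartbeats 2000000 in
/-- The extended representation of `A`. -/
noncomputable def rhoHom : A →⋆ₙₐ[ℂ] (H →L[ℂ] H) where
  toFun := rhoFun π hleft hπ
  map_smul' := fun c a => by
    ext ξ
    show rho2 π hleft hπ (c • a) ((NN π).orthogonalProjectionOnto ξ)
      = c • rhoFun π hleft hπ a ξ
    rw [rho2_smul, ContinuousLinearMap.smul_apply, rhoFun_apply]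
  map_zero' := by
    ext ξ
    rw [rhoFun_apply, rho2_zero, ContinuousLinearMap.zero_apply, ContinuousLinearMap.zero_apply]
  map_add' := fun a b => by
    ext ξ
    rw [rhoFun_apply, ContinuousLinearMap.add_apply, rhoFun_apply, rhoFun_apply, rho2_add,
      ContinuousLinearMap.add_apply]
  map_mul' := fun a b => by
    ext ξ
    rw [ContinuousLinearMap.mul_apply, rhoFun_apply, rhoFun_apply, rhoFun_apply, rho2_mul]
    congr 1
    exact (proj_of_mem π (rho2_mem π hleft hπ b _)).symm
  map_star' := fun a => by
    rw [ContinuousLinearMap.star_eq_adjoint]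
    rw [ContinuousLinearMap.eq_adjoint_iff]
    intro ξ ζ
    rw [rhoFun_apply, rhoFun_apply]
    have hζ : ζ = ↑((NN π).orthogonalProjectionOnto ζ) + (ζ - ↑((NN π).orthogonalProjectionOnto ζ)) :=
      (add_sub_cancel _ _).symm
    have hξ : ξ = ↑((NN π).orthogonalProjectionOnto ξ) + (ξ - ↑((NN π).orthogonalProjectionOnto ξ)) :=
      (add_sub_cancel _ _).symm
    calc ⟪rho2 π hleft hπ (star a) ((NN π).orthogonalProjectionOnto ξ), ζ⟫_ℂ
        = ⟪rho2 π hleft hπ (star a) ((NN π).orthogonalProjectionOnto ξ),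
            ↑((NN π).orthogonalProjectionOnto ζ)⟫_ℂ := by
          conv_lhs => rw [hζ]
          rw [inner_add_right,
            Submodule.inner_right_of_mem_orthogonal (rho2_mem π hleft hπ (star a) _)
              (by exact (NN π).sub_starProjection_mem_orthogonal ζ : ζ - ↑((NN π).orthogonalProjectionOnto ζ) ∈ (NN π)ᗮ), add_zero]
      _ = ⟪↑((NN π).orthogonalProjectionOnto ξ), rho2 π hleft hπ a ((NN π).orthogonalProjectionOnto ζ)⟫_ℂ :=
          rho2_adjoint π hleft hπ a _ _
      _ = ⟪ξ, rho2 π hleft hπ a ((NN π).orthogonalProjectionOnto ζ)⟫_ℂ := by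
          conv_rhs => rw [hξ]
          rw [inner_add_left,
            Submodule.inner_left_of_mem_orthogonal (rho2_mem π hleft hπ a _)
              (by exact (NN π).sub_starProjection_mem_orthogonal ξ : ξ - ↑((NN π).orthogonalProjectionOnto ξ) ∈ (NN π)ᗮ), add_zero]

theorem rhoHom_continuous : Continuous (rhoHom π hleft hπ) := by
  let L : A →ₗ[ℂ] (H →L[ℂ] H) :=
    { toFun := rhoFun π hleft hπ
      map_add' := fun a b => map_add (rhoHom π hleft hπ) a b
      map_smul' := fun c a => map_smul (rhoHom π hleft hπ) c a }
  have hb : ∀ a : A, ‖L a‖ ≤ 1 * ‖a‖ := by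
    intro a
    rw [one_mul]
    have h1 : ‖rhoFun π hleft hπ a‖ ≤ ‖rho2 π hleft hπ a‖ * ‖(NN π).orthogonalProjectionOnto‖ :=
      ContinuousLinearMap.opNorm_comp_le _ _
    calc ‖L a‖ ≤ ‖rho2 π hleft hπ a‖ * ‖(NN π).orthogonalProjectionOnto‖ := h1
      _ ≤ ‖a‖ * 1 :=
        mul_le_mul (rho2_norm_le π hleft hπ a) (Submodule.orthogonalProjectionOnto_norm_le _)
          (ContinuousLinearMap.opNorm_nonneg _) (norm_nonneg _)
      _ = ‖a‖ := mul_one _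
  exact AddMonoidHomClass.continuous_of_bound L 1 hb

theorem pi_orthogonal (x : I) {v : H} (hv : v ∈ (NN π)ᗮ) : π x v = 0 := by
  have h1 : π (star x) (π x v) ∈ NN π :=
    (MM π).le_topologicalClosure (pi_mem_MM π (star x) (π x v))
  have h2 : ⟪π x v, π x v⟫_ℂ = 0 := by
    have h3 : ⟪v, π (star x) (π x v)⟫_ℂ = ⟪π x v, π x v⟫_ℂ := by
      rw [map_star, ContinuousLinearMap.star_eq_adjoint, ContinuousLinearMap.adjoint_inner_right]
    rw [← h3]
    exact Submodule.inner_left_of_mem_orthogonal h1 hv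
  exact inner_self_eq_zero.mp h2

theorem rho2_coe (x : I) (n : NN π) : rho2 π hleft hπ (↑x) n = π x ↑n := by
  refine (denseRange_inclMN π).induction_on (p := fun n =>
      rho2 π hleft hπ (↑x) n = π x ↑n) n ?_ ?_
  · exact isClosed_eq (rho2 π hleft hπ (↑x)).continuous
      ((π x).continuous.comp continuous_subtype_val)
  · rintro ⟨v, hv⟩
    obtain ⟨f, rfl⟩ := hv
    erw [rho2_incl, rho1_apply]
    show SA π hleft (↑x) f = π x (EE π f)
    rw [SA, EE, Finsupp.linearCombination_apply, Finsupp.linearCombination_apply,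
      Finsupp.sum, Finsupp.sum, map_sum]
    refine Finset.sum_congr rfl fun p _ => ?_
    rw [ContinuousLinearMap.map_smul]
    congr 1
    have h1 : amul hleft (↑x) p.1 = x * p.1 := Subtype.ext rfl
    rw [h1, map_mul, ContinuousLinearMap.mul_apply]

theorem rhoHom_eq_pi (x : I) : rhoHom π hleft hπ (↑x : A) = π x := by
  ext ξ
  have h1 : rhoHom π hleft hπ (↑x : A) ξ = rho2 π hleft hπ (↑x) ((NN π).orthogonalProjectionOnto ξ) :=
    rfl
  rw [h1, rho2_coe]
  have hξ : ξ = ↑((NN π).orthogonalProjectionOnto ξ) + (ξ - ↑((NN π).orthogonalProjectionOnto ξ)) :=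
    (add_sub_cancel _ _).symm
  conv_rhs => rw [hξ]
  rw [map_add, pi_orthogonal π x (by exact (NN π).sub_starProjection_mem_orthogonal ξ : ξ - ↑((NN π).orthogonalProjectionOnto ξ) ∈ (NN π)ᗮ), add_zero]

end Construction

end Stmt6Aux

/-- For a two-sided *-ideal `I` of a Banach *-algebra `A`, the maximal C*-seminorm of `I`
coincides with the restriction of the maximal C*-seminorm of `A`; consequently, for any
*-homomorphism `φ` from `A` to a C*-algebra realizing the envelope norm of `A` (so that the
closure of `φ(A)` is `C*(A)`), the norm induced on (the closure of the image of) `I` is the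
envelope norm of `I`, i.e. `C*(I)` is isometrically the closure of the image of `I` in `C*(A)`. -/
theorem stmt6 (A : Type) [NonUnitalNormedRing A] [StarRing A] [NormedStarGroup A]
    [NormedSpace ℂ A] [IsScalarTower ℂ A A] [SMulCommClass ℂ A A] [StarModule ℂ A]
    [CompleteSpace A]
    (I : NonUnitalStarSubalgebra ℂ A)
    (hleft : ∀ a : A, ∀ x ∈ I, a * x ∈ I) (hright : ∀ a : A, ∀ x ∈ I, x * a ∈ I) :
    (∀ x : I, maxCstarSeminormIdeal I x = maxCstarSeminorm A (x : A)) ∧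
    (∀ (B : Type) (_ : NonUnitalNormedRing B) (_ : StarRing B) (_ : CStarRing B)
      (_ : NormedSpace ℂ B) (_ : IsScalarTower ℂ B B) (_ : SMulCommClass ℂ B B)
      (_ : StarModule ℂ B) (_ : CompleteSpace B) (φ : A →⋆ₙₐ[ℂ] B),
      (∀ a : A, ‖φ a‖ = maxCstarSeminorm A a) →
      ∀ x : I, ‖φ (x : A)‖ = maxCstarSeminormIdeal I x) := by
  have hmain : ∀ x : I, maxCstarSeminormIdeal I x = maxCstarSeminorm A (x : A) := by
    intro x
    unfold maxCstarSeminormIdeal maxCstarSeminorm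
    congr 1
    ext r
    simp only [Set.mem_setOf_eq]
    constructor
    · rintro ⟨H, i1, i2, i3, π, hπ, rfl⟩
      letI := i1; letI := i2; letI := i3
      exact ⟨H, i1, i2, i3, Stmt6Aux.rhoHom π hleft hπ,
        Stmt6Aux.rhoHom_continuous π hleft hπ,
        by rw [Stmt6Aux.rhoHom_eq_pi π hleft hπ x]⟩
    · rintro ⟨H, i1, i2, i3, σ, hσ, rfl⟩
      letI := i1; letI := i2; letI := i3
      exact ⟨H, i1, i2, i3, σ.comp (NonUnitalStarSubalgebraClass.subtype I),
        hσ.comp continuous_subtype_val, rfl⟩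
  refine ⟨hmain, ?_⟩
  intro B _ _ _ _ _ _ _ _ φ hφ x
  rw [hφ, hmain x]
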